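/- Projection preserves triangle orientation: let c = (0,0,0) be the camera, let p, q, r lie on the plane z = 1, and let p' = p_z·p, q' = q_z·q, r' = r_z·r with p_z, q_z, r_z > 0. If det(p, q, r) > 0 then (c - p') · ((r' - p') × (q' - p')) > 0; i.e., a clockwise (positively oriented) 2D triangle lifts to a front-facing 3D triangle. -/

import Mathlib

open Matrix

/-- Projection preserves triangle orientation: a positively oriented (clockwise in the paper's
convention) triangle on the image plane `z = 1` lifts, under positive depths, to a
front-facing triangle with respect to the camera `c = 0`. -/
theorem lift_front_facing (p q r : Fin 3 → ℝ)
    (hp : p 2 = 1) (hq : q 2 = 1) (hr : r 2 = 1)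
    (pz qz rz : ℝ) (hpz : 0 < pz) (hqz : 0 < qz) (hrz : 0 < rz)
    (hdet : 0 < Matrix.det ![p, q, r]) :
    0 < (0 - pz • p) ⬝ᵥ ((rz • r - pz • p) ⨯₃ (qz • q - pz • p)) := by
  rw [det_fin_three (A := (![p, q, r] : Matrix (Fin 3) (Fin 3) ℝ))] at hdet
  simp only [cross_apply, dotProduct, Fin.sum_univ_three, Pi.sub_apply, Pi.smul_apply,
    smul_eq_mul, Pi.zero_apply, cons_val_zero, cons_val_one, head_cons, of_apply,
    cons_val', empty_val', cons_val_fin_one, head_fin_const, cons_val_two, tail_cons] at *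
  rw [hp, hq, hr] at *
  nlinarith [mul_pos (mul_pos hpz hqz) hrz]
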